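/- Variance reduction: the variance of the variance-reduced policy-gradient estimate under the chain marginal is at most the variance of the vanilla policy-gradient estimate under the joint distribution: Var_Q(g_vr) ≤ Var_P(g_pg). -/

import Mathlib

private lemma sum_pi_prod {n : ℕ} {A : Type*} [Fintype A] (F : Fin n → A → ℝ) :
    ∑ a : Fin n → A, ∏ k, F k (a k) = ∏ k, ∑ x, F k x := by
  rw [Finset.prod_univ_sum, Fintype.piFinset_univ]

private lemma prod_eq_single_of {n : ℕ} (i : Fin n) (h : Fin n → ℝ)
    (h1 : ∀ k, k ≠ i → h k = 1) : ∏ k, h k = h i := by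
  rw [← Finset.mul_prod_erase _ _ (Finset.mem_univ i), Finset.prod_eq_one
    (fun k hk => h1 k (Finset.ne_of_mem_erase hk)), mul_one]

private lemma prod_eq_pair_of {n : ℕ} {i j : Fin n} (hij : i ≠ j) (h : Fin n → ℝ)
    (h1 : ∀ k, k ≠ i → k ≠ j → h k = 1) : ∏ k, h k = h i * h j := by
  rw [← Finset.mul_prod_erase _ _ (Finset.mem_univ i),
      ← Finset.mul_prod_erase _ _ (Finset.mem_erase.mpr ⟨hij.symm, Finset.mem_univ j⟩),
      Finset.prod_eq_one (fun k hk => h1 k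
        (Finset.ne_of_mem_erase (Finset.mem_of_mem_erase hk)) (Finset.ne_of_mem_erase hk)),
      mul_one]

private lemma E_single {n : ℕ} {C A : Type*} [Fintype A] [DecidableEq A]
    (K : C → A → ℝ) (hK1 : ∀ c, ∑ a, K c a = 1)
    (c : Fin n → C) (i : Fin n) (f : A → ℝ) :
    ∑ a : Fin n → A, (∏ k, K (c k) (a k)) * f (a i) = ∑ x, K (c i) x * f x := by
  have key : ∀ a : Fin n → A, (∏ k, K (c k) (a k)) * f (a i)
      = ∏ k, (K (c k) (a k) * (if k = i then f (a k) else 1)) := by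
    intro a
    rw [Finset.prod_mul_distrib,
      prod_eq_single_of i (fun k => if k = i then f (a k) else 1) (fun k hk => if_neg hk),
      if_pos rfl]
  simp_rw [key]
  rw [sum_pi_prod (fun k x => K (c k) x * if k = i then f x else 1),
    prod_eq_single_of i _ (fun k hk => by simp [if_neg hk, hK1 (c k)])]
  simp

private lemma E_pair {n : ℕ} {C A : Type*} [Fintype A] [DecidableEq A]
    (K : C → A → ℝ) (hK1 : ∀ c, ∑ a, K c a = 1)
    (c : Fin n → C) {i j : Fin n} (hij : i ≠ j) (f g : A → ℝ) :
    ∑ a : Fin n → A, (∏ k, K (c k) (a k)) * (f (a i) * g (a j))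
      = (∑ x, K (c i) x * f x) * (∑ x, K (c j) x * g x) := by
  have key : ∀ a : Fin n → A, (∏ k, K (c k) (a k)) * (f (a i) * g (a j))
      = ∏ k, (K (c k) (a k) * (if k = i then f (a k) else if k = j then g (a k) else 1)) := by
    intro a
    rw [Finset.prod_mul_distrib,
      prod_eq_pair_of hij (fun k => if k = i then f (a k) else if k = j then g (a k) else 1)
        (fun k hk1 hk2 => by simp [if_neg hk1, if_neg hk2])]
    simp [if_neg hij.symm]
  simp_rw [key]
  rw [sum_pi_prod (fun k x => K (c k) x * if k = i then f x else if k = j then g x else 1),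
    prod_eq_pair_of hij _ (fun k hk1 hk2 => by simp [if_neg hk1, if_neg hk2, hK1 (c k)])]
  simp [if_neg hij.symm]



/-- Variance reduction: the variance of the variance-reduced policy-gradient estimate under the
chain marginal `Q` is at most the variance of the vanilla policy-gradient estimate under the
joint distribution `P`: `Var_Q(g_vr) ≤ Var_P(g_pg)`, where
`Var_μ(f) = ∑ x, μ x * (f x)² − (∑ x, μ x * f x)²`. -/
theorem variance_reduction_of_var_reduced_pg
    {C A : Type*} [Fintype C] [Fintype A] [Nonempty C] [Nonempty A] [DecidableEq A]
    (θ₀ : ℝ) (astar : A)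
    (π : ℝ → C → ℝ) (κ : ℝ → C → A → ℝ)
    (hπ0 : ∀ θ c, 0 ≤ π θ c) (hπ1 : ∀ θ, ∑ c, π θ c = 1)
    (hκ0 : ∀ θ c a, 0 ≤ κ θ c a) (hκ1 : ∀ θ c, ∑ a, κ θ c a = 1)
    (hπpos : ∀ c, 0 < π θ₀ c) (hκpos : ∀ c a, 0 < κ θ₀ c a)
    (hπdiff : ∀ c, DifferentiableAt ℝ (fun θ => π θ c) θ₀)
    (hκdiff : ∀ c a, DifferentiableAt ℝ (fun θ => κ θ c a) θ₀)
    (n : ℕ) (hn : 2 ≤ n)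
    (gpg : (Fin n → C × A) → ℝ)
    (hgpg : ∀ y, gpg y =
      (1 / (n : ℝ)) *
        ∑ i,
          (deriv (fun θ => Real.log (π θ (y i).1)) θ₀ +
              deriv (fun θ => Real.log (κ θ (y i).1 (y i).2)) θ₀) *
            ((if (y i).2 = astar then (1 : ℝ) else 0) -
              (1 / ((n : ℝ) - 1)) *
                ∑ j ∈ Finset.univ.erase i, (if (y j).2 = astar then (1 : ℝ) else 0)))
    (gvr : (Fin n → C) → ℝ)
    (hgvr : ∀ c, gvr c =
      (1 / (n : ℝ)) *
        ∑ i,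
          (deriv (fun θ => Real.log (π θ (c i))) θ₀ *
              (κ θ₀ (c i) astar -
                (1 / ((n : ℝ) - 1)) * ∑ j ∈ Finset.univ.erase i, κ θ₀ (c j) astar) +
            deriv (fun θ => κ θ (c i) astar) θ₀))
    (P : (Fin n → C × A) → ℝ)
    (hP : ∀ y, P y = ∏ i, (π θ₀ (y i).1 * κ θ₀ (y i).1 (y i).2))
    (Q : (Fin n → C) → ℝ)
    (hQ : ∀ c, Q c = ∏ i, π θ₀ (c i)) :
    (∑ c : Fin n → C, Q c * (gvr c) ^ 2) - (∑ c : Fin n → C, Q c * gvr c) ^ 2 ≤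
      (∑ y : Fin n → C × A, P y * (gpg y) ^ 2) - (∑ y : Fin n → C × A, P y * gpg y) ^ 2 := by
  classical
  -- score identities
  have hscore : ∀ c a, κ θ₀ c a * deriv (fun θ => Real.log (κ θ c a)) θ₀
      = deriv (fun θ => κ θ c a) θ₀ := by
    intro c a
    have h := ((hκdiff c a).hasDerivAt).log (ne_of_gt (hκpos c a))
    rw [h.deriv]
    rw [mul_div_cancel₀ _ (ne_of_gt (hκpos c a))]
  have hsum0 : ∀ c : C, ∑ x, deriv (fun θ => κ θ c x) θ₀ = 0 := by
    intro c
    have h : HasDerivAt (fun θ => ∑ x, κ θ c x) (∑ x, deriv (fun θ => κ θ c x) θ₀) θ₀ :=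
      HasDerivAt.fun_sum (fun x _ => (hκdiff c x).hasDerivAt)
    have h2 : (fun θ => ∑ x, κ θ c x) = fun _ => (1:ℝ) := funext fun θ => hκ1 θ c
    rw [h2] at h
    simpa using h.unique (hasDerivAt_const _ _)
  have hκ1' : ∀ c : C, ∑ a, κ θ₀ c a = 1 := hκ1 θ₀
  -- first factor computations
  have hA2 : ∀ (ci : C) (s : ℝ),
      ∑ x, κ θ₀ ci x * (s + deriv (fun θ => Real.log (κ θ ci x)) θ₀) = s := by
    intro ci s
    simp_rw [mul_add]
    rw [Finset.sum_add_distrib, ← Finset.sum_mul, hκ1']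
    simp_rw [hscore]
    rw [hsum0]
    ring
  -- conditional expectation identity
  have hcond : ∀ c : Fin n → C,
      ∑ a : Fin n → A, (∏ k, κ θ₀ (c k) (a k)) * gpg (fun i => (c i, a i)) = gvr c := by
    intro c
    have key : ∀ i : Fin n,
        ∑ a : Fin n → A, (∏ k, κ θ₀ (c k) (a k)) *
          ((deriv (fun θ => Real.log (π θ (c i))) θ₀ +
            deriv (fun θ => Real.log (κ θ (c i) (a i))) θ₀) *
            ((if a i = astar then (1:ℝ) else 0) -
              (1/((n:ℝ)-1)) * ∑ j ∈ Finset.univ.erase i, (if a j = astar then (1:ℝ) else 0)))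
        = deriv (fun θ => Real.log (π θ (c i))) θ₀ *
            (κ θ₀ (c i) astar - (1/((n:ℝ)-1)) * ∑ j ∈ Finset.univ.erase i, κ θ₀ (c j) astar) +
          deriv (fun θ => κ θ (c i) astar) θ₀ := by
      intro i
      set s := deriv (fun θ => Real.log (π θ (c i))) θ₀ with hs
      have e1 : ∀ a : Fin n → A,
          (∏ k, κ θ₀ (c k) (a k)) *
            ((s + deriv (fun θ => Real.log (κ θ (c i) (a i))) θ₀) *
              ((if a i = astar then (1:ℝ) else 0) -
                (1/((n:ℝ)-1)) * ∑ j ∈ Finset.univ.erase i, (if a j = astar then (1:ℝ) else 0)))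
          = (∏ k, κ θ₀ (c k) (a k)) *
              ((s + deriv (fun θ => Real.log (κ θ (c i) (a i))) θ₀) *
                (if a i = astar then (1:ℝ) else 0))
            - (1/((n:ℝ)-1)) * ∑ j ∈ Finset.univ.erase i,
                (∏ k, κ θ₀ (c k) (a k)) *
                  ((s + deriv (fun θ => Real.log (κ θ (c i) (a i))) θ₀) *
                    (if a j = astar then (1:ℝ) else 0)) := by
        intro a
        rw [← Finset.mul_sum]
        conv_rhs => rw [← Finset.mul_sum]
        ring
      simp_rw [e1]
      rw [Finset.sum_sub_distrib, ← Finset.mul_sum, Finset.sum_comm]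
      have first : ∑ a : Fin n → A, (∏ k, κ θ₀ (c k) (a k)) *
            ((s + deriv (fun θ => Real.log (κ θ (c i) (a i))) θ₀) *
              (if a i = astar then (1:ℝ) else 0))
          = s * κ θ₀ (c i) astar + deriv (fun θ => κ θ (c i) astar) θ₀ := by
        rw [E_single (κ θ₀) hκ1' c i
          (fun x => (s + deriv (fun θ => Real.log (κ θ (c i) x)) θ₀) *
            (if x = astar then (1:ℝ) else 0))]
        simp only [mul_ite, mul_one, mul_zero, Finset.sum_ite_eq', Finset.mem_univ, if_true]
        rw [mul_add, hscore]
        ring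
      have pair : ∀ j ∈ Finset.univ.erase i,
          ∑ a : Fin n → A, (∏ k, κ θ₀ (c k) (a k)) *
            ((s + deriv (fun θ => Real.log (κ θ (c i) (a i))) θ₀) *
              (if a j = astar then (1:ℝ) else 0))
          = s * κ θ₀ (c j) astar := by
        intro j hj
        have hij : i ≠ j := fun h => (Finset.mem_erase.mp hj).1 h.symm
        rw [E_pair (κ θ₀) hκ1' c hij
          (fun x => s + deriv (fun θ => Real.log (κ θ (c i) x)) θ₀)
          (fun x => if x = astar then (1:ℝ) else 0)]
        rw [hA2]
        simp only [mul_ite, mul_one, mul_zero, Finset.sum_ite_eq', Finset.mem_univ, if_true]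
      rw [first, Finset.sum_congr rfl pair, ← Finset.mul_sum]
      ring
    calc ∑ a : Fin n → A, (∏ k, κ θ₀ (c k) (a k)) * gpg (fun i => (c i, a i))
        = ∑ a : Fin n → A, (1/(n:ℝ)) * ∑ i, (∏ k, κ θ₀ (c k) (a k)) *
            ((deriv (fun θ => Real.log (π θ (c i))) θ₀ +
              deriv (fun θ => Real.log (κ θ (c i) (a i))) θ₀) *
              ((if a i = astar then (1:ℝ) else 0) -
                (1/((n:ℝ)-1)) * ∑ j ∈ Finset.univ.erase i, (if a j = astar then (1:ℝ) else 0))) := by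
          refine Finset.sum_congr rfl fun a _ => ?_
          rw [hgpg]
          rw [mul_left_comm, Finset.mul_sum]
      _ = (1/(n:ℝ)) * ∑ i, ∑ a : Fin n → A, (∏ k, κ θ₀ (c k) (a k)) *
            ((deriv (fun θ => Real.log (π θ (c i))) θ₀ +
              deriv (fun θ => Real.log (κ θ (c i) (a i))) θ₀) *
              ((if a i = astar then (1:ℝ) else 0) -
                (1/((n:ℝ)-1)) * ∑ j ∈ Finset.univ.erase i, (if a j = astar then (1:ℝ) else 0))) := by
          rw [← Finset.mul_sum, Finset.sum_comm]
      _ = gvr c := by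
          rw [Finset.sum_congr rfl (fun i _ => key i), hgvr]
  -- reindexing
  have hre : ∀ F : (Fin n → C × A) → ℝ,
      ∑ y, F y = ∑ c : Fin n → C, ∑ a : Fin n → A, F (fun i => (c i, a i)) := by
    intro F
    rw [Fintype.sum_equiv (Equiv.arrowProdEquivProdArrow (Fin n) (fun _ => C) (fun _ => A)) F
        (fun p => F (fun i => (p.1 i, p.2 i)))
        (fun y => congrArg F (funext fun i => (Prod.mk.eta (p := y i)).symm)),
      Fintype.sum_prod_type]
  have hPfac : ∀ (c : Fin n → C) (a : Fin n → A),
      P (fun i => (c i, a i)) = Q c * ∏ k, κ θ₀ (c k) (a k) := by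
    intro c a
    rw [hP, hQ, ← Finset.prod_mul_distrib]
  have hQ0 : ∀ c, 0 ≤ Q c := fun c => by
    rw [hQ]; exact Finset.prod_nonneg fun i _ => (hπpos (c i)).le
  have hK0 : ∀ (c : Fin n → C) (a : Fin n → A), 0 ≤ ∏ k, κ θ₀ (c k) (a k) :=
    fun c a => Finset.prod_nonneg fun k _ => (hκpos (c k) (a k)).le
  have hK1 : ∀ c : Fin n → C, ∑ a : Fin n → A, ∏ k, κ θ₀ (c k) (a k) = 1 := by
    intro c
    rw [sum_pi_prod (fun k x => κ θ₀ (c k) x)]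
    simp [hκ1']
  have hmean : ∑ y, P y * gpg y = ∑ c, Q c * gvr c := by
    rw [hre (fun y => P y * gpg y)]
    refine Finset.sum_congr rfl fun c _ => ?_
    simp_rw [hPfac, mul_assoc]
    rw [← Finset.mul_sum, hcond c]
  have hsec : ∑ c, Q c * gvr c ^ 2 ≤ ∑ y, P y * gpg y ^ 2 := by
    rw [hre (fun y => P y * gpg y ^ 2)]
    refine Finset.sum_le_sum fun c _ => ?_
    have hCS : gvr c ^ 2 ≤
        ∑ a : Fin n → A, (∏ k, κ θ₀ (c k) (a k)) * gpg (fun i => (c i, a i)) ^ 2 := by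
      rw [← hcond c]
      have h := Finset.sum_mul_sq_le_sq_mul_sq Finset.univ
        (fun a : Fin n → A => Real.sqrt (∏ k, κ θ₀ (c k) (a k)))
        (fun a => Real.sqrt (∏ k, κ θ₀ (c k) (a k)) * gpg (fun i => (c i, a i)))
      have e1 : ∀ a : Fin n → A,
          Real.sqrt (∏ k, κ θ₀ (c k) (a k)) *
            (Real.sqrt (∏ k, κ θ₀ (c k) (a k)) * gpg (fun i => (c i, a i)))
          = (∏ k, κ θ₀ (c k) (a k)) * gpg (fun i => (c i, a i)) := by
        intro a
        rw [← mul_assoc, Real.mul_self_sqrt (hK0 c a)]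
      have e2 : ∀ a : Fin n → A,
          Real.sqrt (∏ k, κ θ₀ (c k) (a k)) ^ 2 = ∏ k, κ θ₀ (c k) (a k) :=
        fun a => Real.sq_sqrt (hK0 c a)
      have e3 : ∀ a : Fin n → A,
          (Real.sqrt (∏ k, κ θ₀ (c k) (a k)) * gpg (fun i => (c i, a i))) ^ 2
          = (∏ k, κ θ₀ (c k) (a k)) * gpg (fun i => (c i, a i)) ^ 2 := by
        intro a
        rw [mul_pow, e2]
      simp_rw [e1, e3, e2] at h
      rw [hK1 c, one_mul] at h
      exact h
    calc Q c * gvr c ^ 2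
        ≤ Q c * ∑ a : Fin n → A, (∏ k, κ θ₀ (c k) (a k)) * gpg (fun i => (c i, a i)) ^ 2 :=
          mul_le_mul_of_nonneg_left hCS (hQ0 c)
      _ = ∑ a : Fin n → A, P (fun i => (c i, a i)) * gpg (fun i => (c i, a i)) ^ 2 := by
          rw [Finset.mul_sum]
          exact Finset.sum_congr rfl fun a _ => by rw [hPfac, mul_assoc]
  exact sub_le_sub hsec (le_of_eq (by rw [hmean]))
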